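/- For a finite field F_q of characteristic p and m = jp+1 with j ≥ 0, the deviation D_m(0) = P_m(0) − (1/q)·C(q+m−2,m) satisfies D_{jp+1}(0) = −D_{jp}(0). -/

import Mathlib

/-- The number of multisets of `m` nonzero elements of `F` whose sum is `z`. -/
def partitionCount (F : Type*) [Field F] [Fintype F] [DecidableEq F]
    (m : ℕ) (z : F) : ℕ :=
  (Finset.univ.filter
    (fun s : Sym F m => (0 : F) ∉ (s : Multiset F) ∧ (s : Multiset F).sum = z)).card

/-- The deviation `D_m(0) = P_m(0) − (1/q)·C(q+m−2, m)`. -/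
noncomputable def deviation (F : Type*) [Field F] [Fintype F] [DecidableEq F]
    (q : ℕ) (m : ℕ) : ℚ :=
  (partitionCount F m (0 : F) : ℚ) - (Nat.choose (q + m - 2) m : ℚ) / q

open Finset

private lemma aux_msum_map_add {F : Type*} [Field F] (c : F) (t : Multiset F) :
    (t.map (· + c)).sum = t.sum + t.card • c := by
  induction t using Multiset.induction with
  | empty => simp
  | cons a t ih =>
    simp only [Multiset.map_cons, Multiset.sum_cons, ih, Multiset.card_cons, succ_nsmul]
    ring

/-- Count of size-`m` multisets over all of `F` summing to `z`. -/
private def fullCount (F : Type*) [Field F] [Fintype F] [DecidableEq F]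
    (m : ℕ) (z : F) : ℕ :=
  (Finset.univ.filter (fun s : Sym F m => (s : Multiset F).sum = z)).card

private lemma aux_sym_sum_map {F : Type*} [Field F] [Fintype F] [DecidableEq F]
    {m : ℕ} (c : F) (s : Sym F m) :
    ((Sym.map (· + c) s : Sym F m) : Multiset F).sum = (s : Multiset F).sum + m • c := by
  rw [Sym.coe_map, aux_msum_map_add]
  congr 2
  exact s.2

private lemma fullCount_translate {F : Type*} [Field F] [Fintype F] [DecidableEq F]
    (m : ℕ) (z c : F) :
    fullCount F m z = fullCount F m (z + m • c) := by
  classical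
  unfold fullCount
  apply Finset.card_nbij' (Sym.map (· + c)) (Sym.map (· + (-c)))
  · intro s hs
    simp only [Finset.mem_coe, mem_filter, mem_univ, true_and] at hs ⊢
    rw [aux_sym_sum_map, hs]
  · intro s hs
    simp only [Finset.mem_coe, mem_filter, mem_univ, true_and] at hs ⊢
    rw [aux_sym_sum_map, hs, add_assoc, ← smul_add]
    simp
  · intro s _
    rw [Sym.map_map]
    have : ((fun x => x + (-c)) ∘ (fun x => x + c)) = id := by
      funext x; simp
    rw [this, Sym.map_id]
  · intro s _
    rw [Sym.map_map]
    have : ((fun x => x + c) ∘ (fun x => x + (-c))) = id := by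
      funext x; simp
    rw [this, Sym.map_id]

private lemma fullCount_const {F : Type*} [Field F] [Fintype F] [DecidableEq F]
    (p : ℕ) [Fact p.Prime] [CharP F p] {m : ℕ} (hm : ¬ p ∣ m) (z : F) :
    fullCount F m z = fullCount F m 0 := by
  have hm' : (m : F) ≠ 0 := by
    rw [Ne, CharP.cast_eq_zero_iff F p m]; exact hm
  have : z = 0 + m • ((m : F)⁻¹ * z) := by
    rw [nsmul_eq_mul, zero_add, ← mul_assoc, mul_inv_cancel₀ hm', one_mul]
  conv_lhs => rw [this]
  exact (fullCount_translate m 0 _).symm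

private lemma q_mul_fullCount {F : Type*} [Field F] [Fintype F] [DecidableEq F]
    (p : ℕ) [Fact p.Prime] [CharP F p] {m : ℕ} (hm : ¬ p ∣ m) :
    Fintype.card F * fullCount F m 0 = (Fintype.card F + m - 1).choose m := by
  classical
  have h : (Finset.univ : Finset (Sym F m)).card
      = ∑ z ∈ (Finset.univ : Finset F),
        (Finset.univ.filter (fun s : Sym F m => (s : Multiset F).sum = z)).card :=
    Finset.card_eq_sum_card_fiberwise (fun s _ => Finset.mem_univ _)
  have h2 : ∀ z ∈ (Finset.univ : Finset F),
      (Finset.univ.filter (fun s : Sym F m => (s : Multiset F).sum = z)).card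
        = fullCount F m 0 := fun z _ => fullCount_const p hm z
  calc Fintype.card F * fullCount F m 0
      = ∑ _z ∈ (Finset.univ : Finset F), fullCount F m 0 := by
        rw [Finset.sum_const, smul_eq_mul, Finset.card_univ]
    _ = (Finset.univ : Finset (Sym F m)).card := by rw [Finset.sum_congr rfl h2] at h; omega
    _ = (Fintype.card F + m - 1).choose m := by
        rw [Finset.card_univ, Sym.card_sym_eq_choose]

private lemma fullCount_zero_eq_sum {F : Type*} [Field F] [Fintype F] [DecidableEq F]
    (m : ℕ) :
    fullCount F m 0 = ∑ k ∈ Finset.range (m + 1), partitionCount F k (0 : F) := by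
  classical
  unfold fullCount
  rw [Finset.card_eq_sum_card_fiberwise
    (f := fun s : Sym F m => ((s : Multiset F).filter (· ≠ 0)).card)
    (t := Finset.range (m + 1)) ?_]
  · apply Finset.sum_congr rfl
    intro k hk
    have hkm : k ≤ m := by
      simpa [Nat.lt_succ_iff] using hk
    unfold partitionCount
    refine Finset.card_bij'
      (fun s hs => (⟨((s : Multiset F).filter (· ≠ 0)),
        (Finset.mem_filter.mp hs).2⟩ : Sym F k))
      (fun t ht => (⟨(t : Multiset F) + Multiset.replicate (m - k) 0,
        by rw [Multiset.card_add, Multiset.card_replicate, Sym.card_coe,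
              Nat.add_sub_cancel' hkm]⟩ :
          Sym F m)) ?_ ?_ ?_ ?_
    · intro s hs
      simp only [Finset.mem_filter, Finset.mem_univ, true_and] at hs ⊢
      refine Finset.mem_filter.mpr ⟨Finset.mem_univ _, ?_, ?_⟩
      · intro h0
        exact (Multiset.of_mem_filter h0) rfl
      · have hsplit := Multiset.filter_add_not (fun a : F => a ≠ 0) (s : Multiset F)
        have hz : ((s : Multiset F).filter (fun a => ¬ a ≠ 0)).sum = 0 := by
          apply Multiset.sum_eq_zero
          intro x hx
          have := Multiset.of_mem_filter hx
          simpa using this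
        have := congrArg Multiset.sum hsplit
        rw [Multiset.sum_add, hz, add_zero] at this
        rw [Sym.coe_mk, this, hs.1]
    · intro t ht
      simp only [Finset.mem_filter, Finset.mem_univ, true_and] at ht ⊢
      refine Finset.mem_filter.mpr ⟨Finset.mem_filter.mpr ⟨Finset.mem_univ _, ?_⟩, ?_⟩
      · rw [Sym.coe_mk, Multiset.sum_add, ht.2, Multiset.sum_replicate, smul_zero, add_zero]
      · rw [Sym.coe_mk, Multiset.filter_add]
        have h1 : (t : Multiset F).filter (· ≠ 0) = (t : Multiset F) :=
          Multiset.filter_eq_self.2 (fun a ha h0 => ht.1 (h0 ▸ ha))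
        have h2 : (Multiset.replicate (m - k) (0 : F)).filter (· ≠ 0) = 0 := by
          rw [Multiset.filter_eq_nil]
          intro a ha
          rw [Multiset.eq_of_mem_replicate ha]
          simp
        rw [h1, h2, add_zero, Sym.card_coe]
    · intro s hs
      simp only [Finset.mem_filter, Finset.mem_univ, true_and] at hs
      apply Subtype.ext
      show ((s : Multiset F).filter (· ≠ 0)) + Multiset.replicate (m - k) 0 = (s : Multiset F)
      have hsplit := Multiset.filter_add_not (fun a : F => a ≠ 0) (s : Multiset F)
      have hrep : (s : Multiset F).filter (fun a => ¬ a ≠ 0) = Multiset.replicate (m - k) 0 := by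
        have hcongr : (s : Multiset F).filter (fun a => ¬ a ≠ 0)
            = (s : Multiset F).filter (· = 0) := by
          apply Multiset.filter_congr
          intro x _
          simp
        have hcount : ((s : Multiset F).filter (fun a => ¬ a ≠ 0)).card = m - k := by
          have hc := congrArg Multiset.card hsplit
          rw [Multiset.card_add, Sym.card_coe] at hc
          rw [hs.2] at hc
          omega
        rw [hcongr] at hcount ⊢
        rw [Multiset.filter_eq'] at hcount ⊢
        rw [Multiset.card_replicate] at hcount
        rw [hcount]
      rw [← hrep]
      exact hsplit
    · intro t ht
      simp only [Finset.mem_filter, Finset.mem_univ, true_and] at ht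
      apply Subtype.ext
      show (((t : Multiset F) + Multiset.replicate (m - k) 0).filter (· ≠ 0)) = (t : Multiset F)
      rw [Multiset.filter_add]
      have h1 : (t : Multiset F).filter (· ≠ 0) = (t : Multiset F) :=
        Multiset.filter_eq_self.2 (fun a ha h0 => ht.1 (h0 ▸ ha))
      have h2 : (Multiset.replicate (m - k) (0 : F)).filter (· ≠ 0) = 0 := by
        rw [Multiset.filter_eq_nil]
        intro a ha
        rw [Multiset.eq_of_mem_replicate ha]
        simp
      rw [h1, h2, add_zero]
  · intro s _
    rw [Finset.mem_coe, Finset.mem_range, Nat.lt_succ_iff]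
    calc ((s : Multiset F).filter (· ≠ 0)).card ≤ (s : Multiset F).card :=
          Multiset.card_le_card (Multiset.filter_le _ _)
      _ = m := s.2

private lemma aux_hockey (n : ℕ) : ∀ m : ℕ,
    ∑ k ∈ Finset.range (m + 1), (n + k).choose k = (n + m + 1).choose m
  | 0 => by simp
  | (m + 1) => by
    rw [Finset.sum_range_succ, aux_hockey n m,
      show n + (m + 1) = n + m + 1 from by omega,
      Nat.choose_succ_succ' (n + m + 1) m]

private lemma sum_deviation_eq_zero {F : Type*} [Field F] [Fintype F] [DecidableEq F]
    (p : ℕ) [Fact p.Prime] [CharP F p] (q : ℕ) (hq : q = Fintype.card F)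
    {m : ℕ} (hm : ¬ p ∣ m) :
    ∑ k ∈ Finset.range (m + 1), deviation F q k = 0 := by
  have hq2 : 2 ≤ q := by rw [hq]; exact Fintype.one_lt_card
  have hq0 : (q : ℚ) ≠ 0 := by positivity
  have hchoose : ∀ k : ℕ, (q + k - 2).choose k = ((q - 2) + k).choose k := by
    intro k; congr 1; omega
  have hsum : ∑ k ∈ Finset.range (m + 1), ((q + k - 2).choose k : ℚ)
      = ((q + m - 1).choose m : ℚ) := by
    rw [← Nat.cast_sum]
    congr 1
    calc ∑ k ∈ Finset.range (m + 1), (q + k - 2).choose k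
        = ∑ k ∈ Finset.range (m + 1), ((q - 2) + k).choose k := by
          apply Finset.sum_congr rfl; intro k _; exact hchoose k
      _ = ((q - 2) + m + 1).choose m := aux_hockey (q - 2) m
      _ = (q + m - 1).choose m := by congr 1; omega
  have hP : ∑ k ∈ Finset.range (m + 1), (partitionCount F k (0 : F) : ℚ)
      = (fullCount F m 0 : ℚ) := by
    rw [fullCount_zero_eq_sum m, Nat.cast_sum]
  have hkey : (q : ℚ) * (fullCount F m 0 : ℚ) = ((q + m - 1).choose m : ℚ) := by
    have := q_mul_fullCount p hm (F := F)
    rw [← hq] at this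
    exact_mod_cast congrArg (Nat.cast (R := ℚ)) this
  unfold deviation
  rw [Finset.sum_sub_distrib, hP, ← Finset.sum_div, hsum]
  field_simp
  linarith [hkey]

theorem stmt_15 (F : Type*) [Field F] [Fintype F] [DecidableEq F]
    (p : ℕ) [Fact p.Prime] [CharP F p] (q : ℕ) (hq : q = Fintype.card F)
    (j : ℕ) :
    deviation F q (j * p + 1) = - deviation F q (j * p) := by
  have hp2 : 2 ≤ p := (Fact.out : p.Prime).two_le
  have h1 : ¬ p ∣ (j * p + 1) := by
    intro h
    have : p ∣ 1 := (Nat.dvd_add_right ⟨j, mul_comm j p⟩).mp h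
    have := Nat.le_of_dvd one_pos this
    omega
  have e1 := sum_deviation_eq_zero p q hq h1
  rcases Nat.eq_zero_or_pos (j * p) with h0 | hpos
  · rw [h0] at e1 ⊢
    rw [Finset.sum_range_succ, Finset.sum_range_one] at e1
    linarith
  · have h2 : ¬ p ∣ (j * p - 1) := by
      intro h
      obtain ⟨a, ha⟩ := h
      rw [mul_comm p a] at ha
      have hja : a < j := by
        rcases Nat.lt_or_ge a j with h' | h'
        · exact h'
        · exfalso
          have : j * p ≤ a * p := Nat.mul_le_mul_right p h'
          omega
      have hone : (j - a) * p = 1 := by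
        rw [Nat.sub_mul]
        omega
      have hdvd : p ∣ 1 := ⟨j - a, by rw [← hone]; ring⟩
      have := Nat.le_of_dvd one_pos hdvd
      omega
    have e2 := sum_deviation_eq_zero p q hq h2
    have hm1 : j * p - 1 + 1 = j * p := by omega
    rw [hm1] at e2
    rw [Finset.sum_range_succ, Finset.sum_range_succ] at e1
    linarith
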